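/- Let 0 < α < 1, let M > 0, and let f : (0,∞) → ℂ be measurable with t ↦ e^{-Mt} f(t) integrable on (0,∞). Then for every s ∈ ℂ with Re(s) > M, one has (s/Γ(1−α)) · ∫₀^∞ f(t) (∫₀^∞ e^{-s(t+τ)} τ^{-α} dτ) dt = s^α · ∫₀^∞ e^{-st} f(t) dt, where s^α is the principal complex power. (Proposition up1: the Laplace transform of the distributional Caputo-type fractional derivative D^α_{t,0} f equals s^α f̂(s).) -/

import Mathlib

open MeasureTheory Real Set

private lemma aux_int (b c : ℝ) (hb : 0 < b) (hc : 0 < c) :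
    IntegrableOn (fun τ : ℝ => τ ^ (b - 1) * Real.exp (-(c * τ))) (Set.Ioi 0) := by
  have h := Real.GammaIntegral_convergent hb
  rw [← mul_zero c, ← integrableOn_Ioi_comp_mul_left_iff _ _ hc] at h
  have h2 := h.const_mul (c ^ (1 - b))
  refine MeasureTheory.IntegrableOn.congr_fun h2 (fun x hx => ?_) measurableSet_Ioi
  have hx0 : (0 : ℝ) < x := hx
  have hcc : c ^ (1 - b) * c ^ (b - 1) = 1 := by
    rw [← Real.rpow_add hc]; norm_num
  rw [Real.mul_rpow hc.le hx0.le,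
    show c ^ (1 - b) * (Real.exp (-(c * x)) * (c ^ (b - 1) * x ^ (b - 1)))
      = (c ^ (1 - b) * c ^ (b - 1)) * (x ^ (b - 1) * Real.exp (-(c * x))) from by ring,
    hcc, one_mul]

private lemma norm_aux (a : ℝ) (z : ℂ) {τ : ℝ} (hτ : 0 < τ) :
    ‖Complex.exp (-z * τ) * ((τ : ℂ) ^ ((a : ℂ) - 1))‖
      = τ ^ (a - 1) * Real.exp (-(z.re * τ)) := by
  rw [norm_mul, Complex.norm_exp,
    Complex.norm_cpow_eq_rpow_re_of_pos hτ]
  have h1 : (-z * (τ : ℂ)).re = -(z.re * τ) := by simp [Complex.mul_re]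
  have h2 : ((a : ℂ) - 1).re = a - 1 := by simp
  rw [h1, h2, mul_comm]

private lemma contOn_cpow (w : ℂ) : ContinuousOn (fun τ : ℝ => (τ : ℂ) ^ w) (Set.Ioi 0) := by
  intro x hx
  have hx0 : (0 : ℝ) < x := hx
  exact ((continuousAt_cpow_const (Or.inl (by simpa using hx0))).comp
    Complex.continuous_ofReal.continuousAt).continuousWithinAt

private lemma aesm_aux (a : ℝ) (g : ℝ → ℂ) (hg : Continuous g) :
    AEStronglyMeasurable (fun τ : ℝ => g τ * (τ : ℂ) ^ ((a : ℂ) - 1))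
      (volume.restrict (Set.Ioi 0)) :=
  (hg.continuousOn.mul (contOn_cpow _)).aestronglyMeasurable measurableSet_Ioi

private lemma intF (a : ℝ) (ha : 0 < a) {z : ℂ} (hz : 0 < z.re) :
    IntegrableOn (fun τ : ℝ => Complex.exp (-z * τ) * ((τ : ℂ) ^ ((a : ℂ) - 1)))
      (Set.Ioi 0) := by
  refine (aux_int a z.re ha hz).mono' (aesm_aux a _ (by continuity)) ?_
  rw [ae_restrict_iff' measurableSet_Ioi]
  filter_upwards with τ hτ
  rw [norm_aux a z hτ]

private lemma key_hasDeriv (a : ℝ) (ha : 0 < a) {s : ℂ} (hs : 0 < s.re) :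
    HasDerivAt (fun z : ℂ => ∫ τ in Set.Ioi (0 : ℝ),
        Complex.exp (-z * τ) * ((τ : ℂ) ^ ((a : ℂ) - 1)))
      (∫ τ in Set.Ioi (0 : ℝ),
        (Complex.exp (-s * τ) * (-1 * (τ : ℂ))) * ((τ : ℂ) ^ ((a : ℂ) - 1))) s := by
  have hmain := hasDerivAt_integral_of_dominated_loc_of_deriv_le
    (μ := volume.restrict (Set.Ioi 0))
    (F := fun (z : ℂ) (τ : ℝ) => Complex.exp (-z * τ) * ((τ : ℂ) ^ ((a : ℂ) - 1)))
    (F' := fun (z : ℂ) (τ : ℝ) =>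
      (Complex.exp (-z * τ) * (-1 * (τ : ℂ))) * ((τ : ℂ) ^ ((a : ℂ) - 1)))
    (x₀ := s) (s := Metric.ball s (s.re / 2))
    (bound := fun τ : ℝ => τ ^ ((a + 1) - 1) * Real.exp (-(s.re / 2 * τ)))
    (Metric.ball_mem_nhds _ (by positivity))
    (Filter.Eventually.of_forall fun z => aesm_aux a _ (by continuity))
    (intF a ha hs)
    (aesm_aux a _ (by continuity))
    ?_ (aux_int (a + 1) (s.re / 2) (by linarith) (by positivity)) ?_
  · exact hmain.2
  · rw [ae_restrict_iff' measurableSet_Ioi]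
    filter_upwards with τ hτ
    intro z hz
    have hzre : s.re / 2 ≤ z.re := by
      have h1 : |z.re - s.re| ≤ ‖z - s‖ := by
        simpa using Complex.abs_re_le_norm (z - s)
      have h2 : ‖z - s‖ < s.re / 2 := by
        simpa [Complex.dist_eq] using mem_ball_iff_norm.mp hz
      have := abs_lt.mp (lt_of_le_of_lt h1 h2)
      linarith [this.1]
    have hτ0 : (0 : ℝ) < τ := hτ
    rw [norm_mul, norm_mul, Complex.norm_exp,
      Complex.norm_cpow_eq_rpow_re_of_pos hτ0]
    have h3 : (-z * (τ : ℂ)).re = -(z.re * τ) := by simp [Complex.mul_re]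
    have h4 : ((a : ℂ) - 1).re = a - 1 := by simp
    have h5 : ‖(-1 : ℂ) * (τ : ℂ)‖ = τ := by
      simp [abs_of_pos hτ0]
    rw [h3, h4, h5]
    have h6 : Real.exp (-(z.re * τ)) ≤ Real.exp (-(s.re / 2 * τ)) := by
      apply Real.exp_le_exp.mpr
      nlinarith
    have h7 : Real.exp (-(z.re * τ)) * τ * τ ^ (a - 1) = τ ^ ((a + 1) - 1) * Real.exp (-(z.re * τ)) := by
      rw [show (a + 1) - 1 = (a - 1) + 1 from by ring, Real.rpow_add_one hτ0.ne']
      ring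
    rw [h7]
    have : (0 : ℝ) ≤ τ ^ ((a + 1) - 1) := Real.rpow_nonneg hτ0.le _
    exact mul_le_mul_of_nonneg_left h6 this
  · filter_upwards with τ
    intro z hz
    have h1 : HasDerivAt (fun z : ℂ => -z * (τ : ℂ)) (-1 * (τ : ℂ)) z :=
      ((hasDerivAt_id z).neg).mul_const _
    exact (h1.cexp).mul_const _

private lemma key (a : ℝ) (ha : 0 < a) (s : ℂ) (hs : 0 < s.re) :
    ∫ τ in Set.Ioi (0 : ℝ), Complex.exp (-s * τ) * ((τ : ℂ) ^ ((a : ℂ) - 1))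
      = Complex.Gamma a * s ^ (-(a : ℂ)) := by
  set F : ℂ → ℂ := fun z => ∫ τ in Set.Ioi (0 : ℝ),
    Complex.exp (-z * τ) * ((τ : ℂ) ^ ((a : ℂ) - 1)) with hFdef
  set g : ℂ → ℂ := fun z => Complex.Gamma a * z ^ (-(a : ℂ)) with hgdef
  set U : Set ℂ := {z : ℂ | 0 < z.re} with hUdef
  have hUopen : IsOpen U := isOpen_lt continuous_const Complex.continuous_re
  have hF : AnalyticOnNhd ℂ F U :=
    DifferentiableOn.analyticOnNhd
      (fun z hz => ((key_hasDeriv a ha hz).differentiableAt).differentiableWithinAt) hUopen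
  have hg : AnalyticOnNhd ℂ g U := by
    refine DifferentiableOn.analyticOnNhd
      (fun z hz => DifferentiableAt.differentiableWithinAt ?_) hUopen
    exact (differentiableAt_id.cpow (differentiableAt_const _) (Or.inl hz)).const_mul _
  have hreal : ∀ r : ℝ, 0 < r → F (r : ℂ) = g (r : ℂ) := by
    intro r hr
    have h1 := Complex.integral_cpow_mul_exp_neg_mul_Ioi
      (a := (a : ℂ)) (by simpa using ha) hr
    have h2 : F (r : ℂ) = ∫ τ in Set.Ioi (0 : ℝ),
        (τ : ℂ) ^ ((a : ℂ) - 1) * Complex.exp (-((r : ℂ) * (τ : ℂ))) := by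
      rw [hFdef]
      refine setIntegral_congr_fun measurableSet_Ioi fun τ hτ => ?_
      rw [mul_comm, neg_mul]
    rw [h2, h1, hgdef]
    rw [one_div, Complex.inv_cpow _ _
      (Complex.arg_ofReal_of_nonneg hr.le ▸ Real.pi_pos.ne), ← Complex.cpow_neg, mul_comm]
  have hfreq : ∃ᶠ z in nhdsWithin 1 {(1 : ℂ)}ᶜ, F z = g z := by
    have hseq : Filter.Tendsto (fun n : ℕ => ((1 + 1 / (n + 1) : ℝ) : ℂ)) Filter.atTop
        (nhdsWithin 1 {(1 : ℂ)}ᶜ) := by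
      rw [tendsto_nhdsWithin_iff]
      constructor
      · have h1 : Filter.Tendsto (fun n : ℕ => (1 + 1 / (n + 1) : ℝ)) Filter.atTop (nhds 1) := by
          have := (tendsto_one_div_add_atTop_nhds_zero_nat).const_add (1 : ℝ)
          simpa using this
        have h2c := (Complex.continuous_ofReal.tendsto (1 : ℝ)).comp h1
        simpa [Function.comp_def] using h2c
      · filter_upwards with n
        simp only [Set.mem_compl_iff, Set.mem_singleton_iff]
        intro hcontra
        have : (1 + 1 / (n + 1) : ℝ) = 1 := by exact_mod_cast hcontra
        have hn : (0 : ℝ) < 1 / (n + 1) := by positivity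
        linarith
    exact hseq.frequently (Filter.Frequently.of_forall fun n => hreal _ (by positivity))
  have h1U : (1 : ℂ) ∈ U := by simp [hUdef]
  exact hF.eqOn_of_preconnected_of_frequently_eq hg
    (convex_halfSpace_re_gt 0).isPreconnected h1U hfreq hs

/-- Proposition up1: for `f` measurable with `e^(-Mt) f(t)` integrable on `(0,∞)` and
`Re s > M`, the Laplace transform of the distributional fractional derivative
`D^α_{t,0} f` equals `s^α f̂(s)`:
`(s/Γ(1-α)) ∫₀^∞ f(t) (∫₀^∞ e^(-s(t+τ)) τ^(-α) dτ) dt = s^α ∫₀^∞ e^(-st) f(t) dt`. -/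
theorem laplace_fractional_derivative (α : ℝ) (hα0 : 0 < α) (hα1 : α < 1)
    (M : ℝ) (hM : 0 < M) (f : ℝ → ℂ) (hmeas : Measurable f)
    (hint : IntegrableOn (fun t => Real.exp (-M * t) • f t) (Set.Ioi 0))
    (s : ℂ) (hs : M < s.re) :
    (s / (Real.Gamma (1 - α) : ℂ)) *
        ∫ t in Set.Ioi (0 : ℝ), f t *
          ∫ τ in Set.Ioi (0 : ℝ), Complex.exp (-s * (t + τ)) * ((τ ^ (-α) : ℝ) : ℂ)
      = s ^ (α : ℂ) * ∫ t in Set.Ioi (0 : ℝ), Complex.exp (-s * t) * f t := by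
  have hs0 : (0 : ℝ) < s.re := lt_trans hM hs
  have hsne : s ≠ 0 := by
    intro h; rw [h] at hs0; simp at hs0
  have hΓpos : (0 : ℝ) < Real.Gamma (1 - α) := Real.Gamma_pos_of_pos (by linarith)
  have hΓne : ((Real.Gamma (1 - α) : ℝ) : ℂ) ≠ 0 := by
    exact_mod_cast hΓpos.ne'
  have hexp : ((-α : ℝ) : ℂ) = (((1 - α : ℝ) : ℂ)) - 1 := by push_cast; ring
  have hinner : ∀ t : ℝ,
      (∫ τ in Set.Ioi (0 : ℝ), Complex.exp (-s * (t + τ)) * ((τ ^ (-α) : ℝ) : ℂ))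
        = Complex.exp (-s * t) * (((Real.Gamma (1 - α) : ℝ) : ℂ) * s ^ ((α : ℂ) - 1)) := by
    intro t
    have h1 : ∀ τ ∈ Set.Ioi (0 : ℝ),
        Complex.exp (-s * (t + τ)) * ((τ ^ (-α) : ℝ) : ℂ)
          = Complex.exp (-s * t) *
              (Complex.exp (-s * τ) * ((τ : ℂ) ^ ((((1 - α : ℝ)) : ℂ) - 1))) := by
      intro τ hτ
      have hτ0 : (0 : ℝ) < τ := hτ
      rw [Complex.ofReal_cpow hτ0.le, hexp,
        show -s * ((t : ℂ) + (τ : ℂ)) = -s * t + -s * τ from by ring,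
        Complex.exp_add, mul_assoc]
    rw [setIntegral_congr_fun measurableSet_Ioi h1, integral_const_mul,
      key (1 - α) (by linarith) s hs0]
    congr 1
    rw [Complex.Gamma_ofReal]
    congr 1
    push_cast; ring
  have houter : (∫ t in Set.Ioi (0 : ℝ), f t *
        ∫ τ in Set.Ioi (0 : ℝ), Complex.exp (-s * (t + τ)) * ((τ ^ (-α) : ℝ) : ℂ))
      = (∫ t in Set.Ioi (0 : ℝ), Complex.exp (-s * t) * f t) *
          (((Real.Gamma (1 - α) : ℝ) : ℂ) * s ^ ((α : ℂ) - 1)) := by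
    rw [← integral_mul_const]
    refine setIntegral_congr_fun measurableSet_Ioi fun t _ => ?_
    rw [hinner t]; ring
  rw [houter]
  have hpow : s ^ (α : ℂ) = s ^ ((α : ℂ) - 1) * s := by
    conv_lhs => rw [show (α : ℂ) = ((α : ℂ) - 1) + 1 from by ring]
    rw [Complex.cpow_add _ _ hsne, Complex.cpow_one]
  rw [hpow]
  field_simp
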